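/- Let p₀, p₁, p₂ ∈ ℝ and suppose the five Routh–Hurwitz-type conditions hold: 1 − p₀ + p₁ − p₂ > 0, 3 + 3p₀ − p₁ − p₂ > 0, 3 − 3p₀ − p₁ + p₂ > 0, 1 + p₀ + p₁ + p₂ > 0, and 1 − p₁ + p₀p₂ − p₀² > 0. Then every complex root λ of the cubic polynomial p(λ) = λ³ + p₂λ² + p₁λ + p₀ satisfies |λ| < 1. -/

import Mathlib

open Polynomial

lemma cubic_hurwitz (a3 a2 a1 a0 : ℝ) (ha3 : 0 < a3) (ha2 : 0 < a2)
    (ha1 : 0 < a1) (ha0 : 0 < a0) (hk : a0 * a3 < a1 * a2)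
    (z : ℂ) (hzre : 0 ≤ z.re)
    (hq : (a3 : ℂ) * z ^ 3 + a2 * z ^ 2 + a1 * z + a0 = 0) : False := by
  set x := z.re with hx
  set y := z.im with hy
  have hzxy : z = (x : ℂ) + (y : ℂ) * Complex.I := (Complex.re_add_im z).symm
  rw [hzxy] at hq
  rw [Complex.ext_iff] at hq
  simp [pow_succ, Complex.mul_re, Complex.mul_im] at hq
  obtain ⟨hre, him⟩ := hq
  have him' : y * (3 * a3 * x ^ 2 - a3 * y ^ 2 + 2 * a2 * x + a1) = 0 := by
    linear_combination him
  rcases mul_eq_zero.mp him' with hy0 | hS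
  · rw [hy0] at hre
    nlinarith [pow_nonneg hzre 3, sq_nonneg x, mul_nonneg (mul_nonneg ha3.le hzre) (sq_nonneg x),
      mul_nonneg ha2.le (sq_nonneg x), mul_nonneg ha1.le hzre]
  · have hS' : a3 * y ^ 2 = 3 * a3 * x ^ 2 + 2 * a2 * x + a1 := by linarith
    have hcomb : -(8 * a3 ^ 2 * x ^ 3) - 8 * a2 * a3 * x ^ 2
        - (2 * a1 * a3 + 2 * a2 ^ 2) * x + (a0 * a3 - a1 * a2) = 0 := by
      linear_combination a3 * hre + (3 * a3 * x + a2) * hS'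
    have t1 : 0 ≤ a3 ^ 2 * x ^ 3 := mul_nonneg (sq_nonneg a3) (pow_nonneg hzre 3)
    have t2 : 0 ≤ a2 * a3 * x ^ 2 := mul_nonneg (mul_nonneg ha2.le ha3.le) (sq_nonneg x)
    have t3 : 0 ≤ (2 * a1 * a3 + 2 * a2 ^ 2) * x := by positivity
    linarith

theorem routh_hurwitz_cubic_roots_inside_unit_circle
    (p₀ p₁ p₂ : ℝ)
    (h1 : 0 < 1 - p₀ + p₁ - p₂)
    (h2 : 0 < 3 + 3 * p₀ - p₁ - p₂)
    (h3 : 0 < 3 - 3 * p₀ - p₁ + p₂)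
    (h4 : 0 < 1 + p₀ + p₁ + p₂)
    (h5 : 0 < 1 - p₁ + p₀ * p₂ - p₀ ^ 2) :
    ∀ lam : ℂ,
      (X ^ 3 + C (p₂ : ℂ) * X ^ 2 + C (p₁ : ℂ) * X + C (p₀ : ℂ)).IsRoot lam →
      ‖lam‖ < 1 := by
  intro lam hroot
  by_contra hcon
  push_neg at hcon
  have hp : lam ^ 3 + (p₂ : ℂ) * lam ^ 2 + (p₁ : ℂ) * lam + (p₀ : ℂ) = 0 := by
    simpa [IsRoot] using hroot
  -- lam ≠ -1
  have hne : lam + 1 ≠ 0 := by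
    intro h
    have hl : lam = -1 := by linear_combination h
    rw [hl] at hp
    have hr := congrArg Complex.re hp
    norm_num at hr
    linarith
  set z : ℂ := (lam - 1) / (lam + 1) with hz
  -- transformed polynomial
  have hq : ((1 - p₀ + p₁ - p₂ : ℝ) : ℂ) * z ^ 3 + ((3 + 3 * p₀ - p₁ - p₂ : ℝ) : ℂ) * z ^ 2
      + ((3 - 3 * p₀ - p₁ + p₂ : ℝ) : ℂ) * z + ((1 + p₀ + p₁ + p₂ : ℝ) : ℂ) = 0 := by
    rw [hz]
    field_simp
    push_cast
    linear_combination (8 : ℂ) * hp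
  -- 0 ≤ z.re
  have hnorm : 1 ≤ Complex.normSq lam := by
    have h := Complex.sq_norm lam
    nlinarith [norm_nonneg lam]
  have hzre : 0 ≤ z.re := by
    rw [hz, Complex.div_re, ← add_div]
    apply div_nonneg _ (Complex.normSq_nonneg _)
    simp only [Complex.sub_re, Complex.add_re, Complex.one_re, Complex.sub_im,
      Complex.add_im, Complex.one_im, Complex.normSq_apply] at hnorm ⊢
    nlinarith [hnorm]
  exact cubic_hurwitz _ _ _ _ h1 h2 h3 h4 (by nlinarith) z hzre hq
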